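/- Let F be a field of characteristic p > 0. Then F is locally embeddable into finite fields of characteristic p: for every finite subset K ⊆ F there exist a finite field E of characteristic p and a local embedding of K into E. In particular, F is locally embeddable into the class of matrix algebras over 𝔽_p: for every finite subset K ⊆ F there exist d ≥ 1 and a local embedding of K into M_d(ZMod p). -/

import Mathlib

/-- `f` is a local embedding of the finite subset `K` of the ring `R` into the ring `S`:
it preserves addition, multiplication and the identity insofar as this makes sense
within `K`, and is injective on `K`. -/
def IsLocalEmbeddingOn (R S : Type*) [Ring R] [Ring S] (K : Set R) (f : R → S) : Prop :=
  (∀ x ∈ K, ∀ y ∈ K, x + y ∈ K → f (x + y) = f x + f y) ∧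
  (∀ x ∈ K, ∀ y ∈ K, x * y ∈ K → f (x * y) = f x * f y) ∧
  ((1 : R) ∈ K → f 1 = 1) ∧
  Set.InjOn f K

/-- A local embedding of a finite subset of a field `F` of characteristic `p`
into a finite field `E` of characteristic `p`. -/
structure FiniteFieldLocalEmbedding (F : Type*) [Field F] (p : ℕ) (K : Set F) where
  E : Type
  [fieldE : Field E]
  [finE : Finite E]
  charE : CharP E p
  f : F → E
  emb : IsLocalEmbeddingOn F E K f

/-- Composing a local embedding with an injective ring homomorphism yields a
local embedding. -/
theorem IsLocalEmbeddingOn.comp {R S S' : Type*} [Ring R] [Ring S] [Ring S'] {K : Set R}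
    {f : R → S} (h : IsLocalEmbeddingOn R S K f) (g : S →+* S') (hg : Function.Injective g) :
    IsLocalEmbeddingOn R S' K (g ∘ f) := by
  obtain ⟨h1, h2, h3, h4⟩ := h
  refine ⟨fun x hx y hy hxy => ?_, fun x hx y hy hxy => ?_, fun h1' => ?_,
    fun x hx y hy hxy => h4 hx hy (hg hxy)⟩
  · simp [Function.comp, h1 x hx y hy hxy]
  · simp [Function.comp, h2 x hx y hy hxy]
  · simp [Function.comp, h3 h1']

set_option maxHeartbeats 1000000 in
set_option synthInstance.maxHeartbeats 400000 in
/-- A field of characteristic `p > 0` is locally embeddable into finite fields of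
characteristic `p`, and in particular into matrix algebras over `𝔽_p`. -/
theorem field_locally_embeds_into_finite_fields (F : Type*) [Field F]
    (p : ℕ) (hp : p.Prime) [CharP F p] (K : Set F) (hK : K.Finite) :
    Nonempty (FiniteFieldLocalEmbedding F p K) ∧
    ∃ d : ℕ, 1 ≤ d ∧ ∃ f : F → Matrix (Fin d) (Fin d) (ZMod p),
      IsLocalEmbeddingOn F (Matrix (Fin d) (Fin d) (ZMod p)) K f := by
  classical
  haveI : Fact p.Prime := ⟨hp⟩
  letI : Algebra (ZMod p) F := ZMod.algebra _ _
  set A : Subalgebra (ZMod p) F := Algebra.adjoin (ZMod p) K with hAdef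
  haveI : Algebra.FiniteType (ZMod p) A := by
    rw [← Subalgebra.fg_iff_finiteType, hAdef, ← hK.coe_toFinset]
    exact Subalgebra.fg_adjoin_finset _
  haveI : IsJacobsonRing A := isJacobsonRing_of_finiteType (A := ZMod p)
  have hmem : ∀ x ∈ K, x ∈ A := fun x hx => Algebra.subset_adjoin hx
  set T : Finset F := hK.toFinset with hTdef
  have hT1 : ∀ q ∈ T.offDiag, q.1 ∈ K ∧ q.2 ∈ K ∧ q.1 ≠ q.2 := by
    intro q hq
    rw [Finset.mem_offDiag] at hq
    simpa [hTdef, Set.Finite.mem_toFinset] using hq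
  -- the product of all differences of distinct elements of K, as an element of A
  set s : A := ∏ q ∈ T.offDiag.attach,
      (⟨q.1.1 - q.1.2, sub_mem (hmem _ (hT1 _ q.2).1) (hmem _ (hT1 _ q.2).2.1)⟩ : A) with hsdef
  have hs : s ≠ 0 := by
    rw [hsdef]
    rw [Finset.prod_ne_zero_iff]
    intro q _
    intro h0
    have := congrArg Subtype.val h0
    simp only at this
    exact (hT1 _ q.2).2.2 (sub_eq_zero.mp this)
  -- find a maximal ideal avoiding s
  have hjac : (⊥ : Ideal A).jacobson = ⊥ := by
    rw [← Ideal.radical_eq_jacobson, Ideal.radical_bot_of_noZeroDivisors]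
  have hex : ∃ m : Ideal A, m.IsMaximal ∧ s ∉ m := by
    by_contra h
    push_neg at h
    have hsj : s ∈ (⊥ : Ideal A).jacobson := by
      rw [Ideal.jacobson, Ideal.mem_sInf]
      rintro J ⟨-, hJ⟩
      exact h J hJ
    rw [hjac] at hsj
    exact hs hsj
  obtain ⟨m, hm, hsm⟩ := hex
  haveI : m.IsMaximal := hm
  letI : Field (A ⧸ m) := Ideal.Quotient.field m
  haveI : Algebra.FiniteType (ZMod p) (A ⧸ m) :=
    Algebra.FiniteType.of_surjective (Ideal.Quotient.mkₐ (ZMod p) m)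
      (Ideal.Quotient.mkₐ_surjective (ZMod p) m)
  haveI : Module.Finite (ZMod p) (A ⧸ m) :=
    finite_of_finite_type_of_isJacobsonRing (ZMod p) (A ⧸ m)
  haveI : Finite (A ⧸ m) := Module.finite_of_finite (ZMod p)
  haveI : CharP (A ⧸ m) p := charP_of_injective_algebraMap' (ZMod p) (A := A ⧸ m) p
  -- the local embedding into A ⧸ m
  let π := Ideal.Quotient.mk m
  let f : F → (A ⧸ m) := fun x => if h : x ∈ A then π ⟨x, h⟩ else 0
  have hf : ∀ (x : F) (hx : x ∈ A), f x = π ⟨x, hx⟩ := fun x hx => dif_pos hx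
  have key : IsLocalEmbeddingOn F (A ⧸ m) K f := by
    refine ⟨?_, ?_, ?_, ?_⟩
    · intro x hx y hy _
      rw [hf (x + y) (add_mem (hmem x hx) (hmem y hy)), hf x (hmem x hx), hf y (hmem y hy),
        ← map_add]
      rfl
    · intro x hx y hy _
      rw [hf (x * y) (mul_mem (hmem x hx) (hmem y hy)), hf x (hmem x hx), hf y (hmem y hy),
        ← map_mul]
      rfl
    · intro _
      rw [hf 1 (one_mem A)]
      exact map_one π
    · intro x hx y hy hxy
      by_contra hne
      have hq : (x, y) ∈ T.offDiag := by
        rw [Finset.mem_offDiag]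
        exact ⟨hK.mem_toFinset.2 hx, hK.mem_toFinset.2 hy, hne⟩
      have hdvd : (⟨x - y, sub_mem (hmem x hx) (hmem y hy)⟩ : A) ∣ s :=
        Finset.dvd_prod_of_mem _ (Finset.mem_attach T.offDiag ⟨(x, y), hq⟩)
      rw [hf x (hmem x hx), hf y (hmem y hy)] at hxy
      have hsub : (⟨x - y, sub_mem (hmem x hx) (hmem y hy)⟩ : A) ∈ m := by
        have := Ideal.Quotient.eq.mp hxy
        exact this
      obtain ⟨c, hc⟩ := hdvd
      rw [hc] at hsm
      exact hsm (m.mul_mem_right c hsub)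
  -- shrink A ⧸ m to a `Type 0`
  haveI : Small.{0} (A ⧸ m) := small_of_injective (Finite.equivFin (A ⧸ m)).injective
  let μ : Shrink.{0} (A ⧸ m) ≃+* (A ⧸ m) := Shrink.ringEquiv (A ⧸ m)
  haveI : CharP (Shrink.{0} (A ⧸ m)) p :=
    charP_of_injective_ringHom (f := μ.symm.toRingHom) μ.symm.injective p
  haveI : Finite (Shrink.{0} (A ⧸ m)) := Finite.of_equiv _ (equivShrink _)
  constructor
  · exact ⟨{ E := Shrink.{0} (A ⧸ m)
             charE := inferInstance
             f := μ.symm ∘ f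
             emb := key.comp μ.symm.toRingHom μ.symm.injective }⟩
  · -- embed A ⧸ m into matrices over 𝔽_p
    set d : ℕ := Module.finrank (ZMod p) (A ⧸ m) with hd
    have hd1 : 1 ≤ d := Module.finrank_pos
    let b : Module.Basis (Fin d) (ZMod p) (A ⧸ m) := Module.finBasis (ZMod p) (A ⧸ m)
    let g : (A ⧸ m) →+* Matrix (Fin d) (Fin d) (ZMod p) :=
      ((LinearMap.toMatrixAlgEquiv b).toRingEquiv.toRingHom).comp
        (Algebra.lmul (ZMod p) (A ⧸ m)).toRingHom
    have hg : Function.Injective g :=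
      (LinearMap.toMatrixAlgEquiv b).injective.comp (Algebra.lmul_injective)
    exact ⟨d, hd1, g ∘ f, key.comp g hg⟩
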